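/- For every L there exist infinitely many runs of more than L consecutive non-squarefree integers: for all natural numbers L and M there exists N > M such that none of the integers N, N+1, …, N+L is squarefree. -/

import Mathlib

/-- For every `L` there exist infinitely many runs of more than `L` consecutive
non-squarefree integers: for all `L M` there exists `N > M` such that none of
`N, N+1, …, N+L` is squarefree. -/
theorem infinitely_many_long_nonsquarefree_runs :
    ∀ L M : ℕ, ∃ N : ℕ, N > M ∧ ∀ i ≤ L, ¬ Squarefree (N + i) := by
  intro L M
  set p : ℕ → ℕ := fun i => Nat.nth Nat.Prime i with hp
  set s : ℕ → ℕ := fun i => (p i) ^ 2 with hs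
  have hprime : ∀ i, Nat.Prime (p i) := fun i => Nat.prime_nth_prime i
  have hinj : Function.Injective p := Nat.nth_injective Nat.infinite_setOf_prime
  have hsne : ∀ i ∈ Finset.range (L + 1), s i ≠ 0 := fun i _ =>
    pow_ne_zero _ (hprime i).pos.ne'
  have hpp : Set.Pairwise (Finset.range (L + 1) : Set ℕ) (Function.onFun Nat.Coprime s) := by
    intro i _ j _ hij
    show Nat.Coprime (s i) (s j)
    exact ((Nat.coprime_primes (hprime i) (hprime j)).mpr
      (fun h => hij (hinj h))).pow _ _
  set a : ℕ → ℕ := fun i => s i * (L + 1) - i with ha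
  obtain ⟨k, hk⟩ := Nat.chineseRemainderOfFinset a s (Finset.range (L + 1)) hsne hpp
  have hdvd : ∀ i ≤ L, s i ∣ k + i := by
    intro i hi
    have hmem : i ∈ Finset.range (L + 1) := Finset.mem_range.mpr (Nat.lt_succ_of_le hi)
    have h1 : k + i ≡ a i + i [MOD s i] := (hk i hmem).add_right i
    have hile : i ≤ s i * (L + 1) := by
      have : 1 ≤ s i := (hprime i).one_lt.le.trans (Nat.le_self_pow two_ne_zero _)
      calc i ≤ L + 1 := Nat.le_succ_of_le hi
        _ = 1 * (L + 1) := (one_mul _).symm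
        _ ≤ s i * (L + 1) := Nat.mul_le_mul_right _ this
    have h2 : a i + i = s i * (L + 1) := by
      simp only [ha]; omega
    have h3 : k + i ≡ 0 [MOD s i] := by
      rw [h2] at h1
      exact h1.trans (Nat.modEq_zero_iff_dvd.mpr ⟨L + 1, rfl⟩)
    exact (Nat.modEq_zero_iff_dvd).mp h3
  set P : ℕ := ∏ i ∈ Finset.range (L + 1), s i with hP
  have hPdvd : ∀ i ≤ L, s i ∣ P := fun i hi =>
    Finset.dvd_prod_of_mem s (Finset.mem_range.mpr (Nat.lt_succ_of_le hi))
  have hPpos : 1 ≤ P := Nat.one_le_iff_ne_zero.mpr (Finset.prod_ne_zero_iff.mpr hsne)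
  refine ⟨k + (M + 1) * P, ?_, ?_⟩
  · have : M + 1 ≤ (M + 1) * P := Nat.le_mul_of_pos_right _ hPpos
    omega
  · intro i hi hsf
    have hdvd' : p i * p i ∣ k + (M + 1) * P + i := by
      have : s i ∣ k + i + (M + 1) * P :=
        Nat.dvd_add (hdvd i hi) (Dvd.dvd.mul_left (hPdvd i hi) _)
      rw [hs] at this
      simpa [sq, add_right_comm] using this
    exact (hprime i).not_isUnit (hsf (p i) hdvd')
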